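/- Let L be a field of characteristic zero, let k be an algebraic closure of L, and let D be a division ring equipped with an L-algebra structure such that there is a k-algebra isomorphism e : D ⊗_L k ≅ M₄(k) (so D is a central division algebra of degree 4 over L). Then for every nonzero d ∈ D, the following are equivalent: (i) there exists μ ∈ k ∖ {0} such that rank(e(d ⊗ 1) − μ·1) ≤ 1, where 1 is the 4×4 identity matrix; (ii) d = λ·1_D for some λ ∈ L ∖ {0}. In other words, regarding D^× as a subgroup of GL₄(k) via d ↦ e(d ⊗ 1), one has ({g ∈ GL₄(k) : rank(g − 1) ≤ 1}·k^×) ∩ D^× = L^×. -/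

import Mathlib

open scoped TensorProduct

attribute [local instance] Algebra.TensorProduct.rightAlgebra

section Aux

variable {L k D : Type*} [Field L] [Field k] [Algebra L k]
  [DivisionRing D] [Algebra L D]

/-- If `v` is an `L`-linearly independent family in `D`, then a vanishing sum
`∑ v j ⊗ c j = 0` in `D ⊗[L] k` forces all `c j = 0`. -/
theorem aux_sum_tmul_indep {ι : Type*} [Fintype ι] [DecidableEq ι] {v : ι → D}
    (hv : LinearIndependent L v) {c : ι → k}
    (h : (∑ j, v j ⊗ₜ[L] c j) = 0) (i : ι) : c i = 0 := by
  classical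
  set W := Submodule.span L (Set.range v) with hW
  let bW : Module.Basis ι L W := Module.Basis.span hv
  obtain ⟨W', hW'⟩ := Submodule.exists_isCompl W
  let π : D →ₗ[L] W := Submodule.linearProjOfIsCompl W W' hW'
  let φ : D →ₗ[L] L := (bW.coord i) ∘ₗ π
  have hφ : ∀ j, φ (v j) = if j = i then 1 else 0 := by
    intro j
    have hm : v j ∈ W := Submodule.subset_span ⟨j, rfl⟩
    have hπ : π (v j) = ⟨v j, hm⟩ := by
      have := Submodule.linearProjOfIsCompl_apply_left hW' (⟨v j, hm⟩ : W)
      exact this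
    have hb : bW j = (⟨v j, hm⟩ : W) := Module.Basis.span_apply hv j
    simp only [φ, LinearMap.comp_apply, hπ, ← hb, Module.Basis.coord_apply, Module.Basis.repr_self]
    simp [Finsupp.single_apply]
  let ψ : D ⊗[L] k →ₗ[L] k :=
    (TensorProduct.lid L k).toLinearMap ∘ₗ (LinearMap.rTensor k φ)
  have hψ : ∀ (x : D) (a : k), ψ (x ⊗ₜ[L] a) = φ x • a := by
    intro x a
    simp [ψ]
  have h0 := congrArg ψ h
  rw [map_sum, map_zero] at h0
  simp only [hψ, hφ, ite_smul, one_smul, zero_smul] at h0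
  rw [Finset.sum_ite_eq' Finset.univ i c] at h0
  simpa using h0

theorem aux_smul_tmul (c : k) (x : D) (b : k) :
    c • (x ⊗ₜ[L] b) = x ⊗ₜ[L] (c * b) := by
  rw [Algebra.smul_def]
  show ((1 : D) ⊗ₜ[L] c) * (x ⊗ₜ[L] b) = x ⊗ₜ[L] (c * b)
  rw [Algebra.TensorProduct.tmul_mul_tmul, one_mul]

theorem aux_smul_tmul_one (c : k) (x : D) :
    c • (x ⊗ₜ[L] (1 : k)) = x ⊗ₜ[L] c := by
  rw [aux_smul_tmul, mul_one]

/-- The commutativity `k`-linear equivalence `D ⊗[L] k ≃ₗ[k] k ⊗[L] D`. -/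
noncomputable def commk : (D ⊗[L] k) ≃ₗ[k] (k ⊗[L] D) := by
  refine LinearEquiv.ofLinear
    { toFun := TensorProduct.comm L D k
      map_add' := fun x y => map_add _ x y
      map_smul' := fun μ x => ?_ }
    { toFun := (TensorProduct.comm L D k).symm
      map_add' := fun x y => map_add _ x y
      map_smul' := fun μ x => ?_ } ?_ ?_
  · induction x using TensorProduct.induction_on with
    | zero => simp
    | tmul a b =>
      rw [aux_smul_tmul]
      simp [TensorProduct.smul_tmul']
    | add x y hx hy =>
      simp only [smul_add, map_add, RingHom.id_apply] at hx hy ⊢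
      rw [hx, hy]
  · induction x using TensorProduct.induction_on with
    | zero => simp
    | tmul a b =>
      rw [TensorProduct.smul_tmul']
      simp only [smul_eq_mul, RingHom.id_apply, TensorProduct.comm_symm_tmul]
      rw [aux_smul_tmul]
    | add x y hx hy =>
      simp only [smul_add, map_add, RingHom.id_apply] at hx hy ⊢
      rw [hx, hy]
  · apply LinearMap.ext; intro x
    induction x using TensorProduct.induction_on with
    | zero => simp
    | tmul a b => simp
    | add x y hx hy => simp_all
  · apply LinearMap.ext; intro x
    induction x using TensorProduct.induction_on with
    | zero => simp
    | tmul a b => simp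
    | add x y hx hy => simp_all

@[simp] theorem commk_tmul (x : D) (c : k) :
    (commk : D ⊗[L] k ≃ₗ[k] k ⊗[L] D) (x ⊗ₜ[L] c) = c ⊗ₜ[L] x := rfl

@[simp] theorem commk_symm_tmul (x : D) (c : k) :
    (commk : D ⊗[L] k ≃ₗ[k] k ⊗[L] D).symm (c ⊗ₜ[L] x) = x ⊗ₜ[L] c := rfl

/-- A polynomial over `k` of degree less than the degree of the minimal polynomial of `d`
that annihilates `d ⊗ 1` must be zero. -/
theorem aux_eq_zero_of_aeval_tmul (d : D) (P : Polynomial k)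
    (hP : Polynomial.aeval (d ⊗ₜ[L] (1 : k) : D ⊗[L] k) P = 0)
    (hdeg : P.natDegree + 1 ≤ (minpoly L d).natDegree) : P = 0 := by
  classical
  set n := P.natDegree + 1 with hn
  have hind : LinearIndependent L (fun i : Fin (minpoly L d).natDegree => d ^ (i : ℕ)) :=
    linearIndependent_pow d
  have hv : LinearIndependent L (fun i : Fin n => d ^ (i : ℕ)) := by
    have := hind.comp (Fin.castLE hdeg) (Fin.castLE_injective hdeg)
    exact this
  have hsum : (∑ i : Fin n, (d ^ (i : ℕ)) ⊗ₜ[L] (P.coeff i)) = 0 := by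
    have h1 := Polynomial.aeval_eq_sum_range (R := k) (p := P) (d ⊗ₜ[L] (1 : k) : D ⊗[L] k)
    rw [hP] at h1
    rw [← hn] at h1
    rw [Finset.sum_range] at h1
    have h2 : ∀ i : Fin n,
        P.coeff i • ((d ⊗ₜ[L] (1 : k)) ^ (i : ℕ)) = (d ^ (i : ℕ)) ⊗ₜ[L] (P.coeff i) := by
      intro i
      rw [Algebra.TensorProduct.tmul_pow, one_pow, aux_smul_tmul_one]
    rw [Finset.sum_congr rfl (fun i _ => h2 i)] at h1
    exact h1.symm
  have hc : ∀ i : Fin n, P.coeff i = 0 := fun i => aux_sum_tmul_indep hv hsum i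
  ext i
  rcases lt_or_ge i n with h | h
  · simpa using hc ⟨i, h⟩
  · simp [Polynomial.coeff_eq_zero_of_natDegree_lt (by omega : P.natDegree < i)]

end Aux

section MatrixAux

open Matrix

variable {k : Type*} [Field k]

/-- A square matrix of rank at most one satisfies `N² = (tr N) • N`. -/
theorem aux_mul_self_of_rank_le_one {N : Matrix (Fin 4) (Fin 4) k} (h : N.rank ≤ 1) :
    N * N = N.trace • N := by
  classical
  have hle : Module.finrank k (Submodule.span k (Set.range Nᵀ)) ≤ 1 := by
    exact (Matrix.rank_eq_finrank_span_cols N).symm.trans_le h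
  have hpr : (Submodule.span k (Set.range Nᵀ)).IsPrincipal :=
    (Submodule.finrank_le_one_iff_isPrincipal _).mp hle
  obtain ⟨u, hu⟩ := hpr
  have hcol : ∀ j, ∃ c : k, Nᵀ j = c • u := by
    intro j
    have : Nᵀ j ∈ Submodule.span k (Set.range Nᵀ) := Submodule.subset_span ⟨j, rfl⟩
    rw [hu, Submodule.mem_span_singleton] at this
    obtain ⟨c, hc⟩ := this
    exact ⟨c, hc.symm⟩
  choose v hv using hcol
  have hN : ∀ i j, N i j = v j * u i := by
    intro i j
    have := congrFun (hv j) i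
    simpa [Matrix.transpose_apply] using this
  have htr : N.trace = ∑ l, v l * u l := by
    simp [Matrix.trace, Matrix.diag, hN]
  ext i j
  rw [Matrix.mul_apply, Matrix.smul_apply, htr, hN i j]
  simp only [hN]
  rw [smul_eq_mul, Finset.sum_mul]
  congr 1
  funext l
  ring

/-- Trace of left multiplication by `A` on 4×4 matrices is `4 tr A`. -/
theorem aux_trace_mulLeft_matrix (A : Matrix (Fin 4) (Fin 4) k) :
    LinearMap.trace k _ (LinearMap.mulLeft k A) = 4 * A.trace := by
  classical
  let b := Matrix.stdBasis k (Fin 4) (Fin 4)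
  rw [LinearMap.trace_eq_matrix_trace k b]
  have hrepr : ∀ (M : Matrix (Fin 4) (Fin 4) k) (p : Fin 4 × Fin 4),
      b.repr M p = M p.1 p.2 := by
    intro M p
    simp [b, Matrix.stdBasis, Module.Basis.repr_reindex]
  have hdiag : ∀ p : Fin 4 × Fin 4,
      (LinearMap.toMatrix b b (LinearMap.mulLeft k A)) p p = A p.1 p.1 := by
    intro p
    rw [LinearMap.toMatrix_apply, hrepr]
    have hb : b p = Matrix.single p.1 p.2 (1 : k) := by
      rw [show b p = Matrix.stdBasis k (Fin 4) (Fin 4) (p.1, p.2) from rfl,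
        Matrix.stdBasis_eq_single]
    rw [hb]
    simp [LinearMap.mulLeft_apply]
  rw [Matrix.trace]
  simp only [Matrix.diag, hdiag]
  rw [Fintype.sum_prod_type]
  simp [Finset.sum_const, Matrix.trace, Matrix.diag, Finset.mul_sum]

end MatrixAux

/-- Let `D` be a division algebra of degree 4 over a characteristic-zero field `L`, with an
identification `e : D ⊗_L k ≅ M₄(k)` over the algebraic closure `k` of `L`.  Then a nonzero
`d ∈ D` satisfies `rank(e(d ⊗ 1) − μ·1) ≤ 1` for some `μ ∈ k^×` if and only if `d` is a
nonzero scalar from `L`; that is, `({g : rank(g − 1) ≤ 1}·k^×) ∩ D^× = L^×`. -/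
theorem stmt_13 {L k D : Type*} [Field L] [CharZero L] [Field k]
    [Algebra L k] [IsAlgClosure L k]
    [DivisionRing D] [Algebra L D]
    (e : (D ⊗[L] k) ≃ₐ[k] Matrix (Fin 4) (Fin 4) k)
    (d : D) (hd : d ≠ 0) :
    (∃ μ : k, μ ≠ 0 ∧ (e (d ⊗ₜ[L] 1) - μ • 1).rank ≤ 1) ↔
      ∃ lam : L, lam ≠ 0 ∧ d = algebraMap L D lam := by
  classical
  haveI : CharZero k := charZero_of_injective_algebraMap (algebraMap L k).injective
  constructor
  · rintro ⟨μ, hμ0, hrank⟩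
    set A := e (d ⊗ₜ[L] (1 : k)) with hA
    -- Step 1: D is finite-dimensional over L.
    haveI hFD : FiniteDimensional L D := by
      apply Module.rank_lt_aleph0_iff.mp
      refine lt_of_le_of_lt (rank_le fun s hs => ?_) (Cardinal.nat_lt_aleph0 16)
      have hw : LinearIndependent k (fun i : s => e ((i : D) ⊗ₜ[L] (1 : k))) := by
        rw [Fintype.linearIndependent_iff]
        intro c hc i
        have h1 : e (∑ j : s, c j • ((j : D) ⊗ₜ[L] (1 : k))) = 0 := by
          rw [map_sum]
          simp_rw [map_smul]
          exact hc
        have h2 : (∑ j : s, (j : D) ⊗ₜ[L] c j) = 0 := by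
          apply e.injective
          rw [map_zero, ← h1]
          congr 1
          exact Finset.sum_congr rfl fun j _ => (aux_smul_tmul_one (c j) (j : D)).symm
        exact aux_sum_tmul_indep hs h2 i
      have hcard := hw.fintype_card_le_finrank
      rw [Module.finrank_matrix] at hcard
      simpa [Fintype.card_coe] using hcard
    have hint : IsIntegral L d := IsIntegral.of_finite L d
    set m := minpoly L d with hm
    have hm_monic : m.Monic := minpoly.monic hint
    have hr_pos : 0 < m.natDegree := minpoly.natDegree_pos hint
    -- Step 2: the rank-one matrix equation gives a quadratic annihilating polynomial.
    set N := A - μ • (1 : Matrix (Fin 4) (Fin 4) k) with hN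
    set t := N.trace with ht
    have hNN : N * N = t • N := aux_mul_self_of_rank_le_one hrank
    set q : Polynomial k :=
      (Polynomial.X - Polynomial.C μ) * (Polynomial.X - Polynomial.C (μ + t)) with hq
    have hq_monic : q.Monic := (Polynomial.monic_X_sub_C μ).mul (Polynomial.monic_X_sub_C _)
    have hq_deg : q.natDegree = 2 := by
      rw [hq, Polynomial.natDegree_mul (Polynomial.X_sub_C_ne_zero μ)
        (Polynomial.X_sub_C_ne_zero _), Polynomial.natDegree_X_sub_C,
        Polynomial.natDegree_X_sub_C]
    have hqA : Polynomial.aeval A q = 0 := by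
      rw [hq, map_mul]
      have e1 : Polynomial.aeval A (Polynomial.X - Polynomial.C μ) = N := by
        rw [map_sub, Polynomial.aeval_X, Polynomial.aeval_C,
          Algebra.algebraMap_eq_smul_one, ← hN]
      have e2 : Polynomial.aeval A (Polynomial.X - Polynomial.C (μ + t)) = N - t • 1 := by
        rw [map_sub, Polynomial.aeval_X, Polynomial.aeval_C,
          Algebra.algebraMap_eq_smul_one, hN, add_smul, ← sub_sub]
      rw [e1, e2, mul_sub, hNN, mul_smul_comm, mul_one, sub_self]
    have hqE : Polynomial.aeval (d ⊗ₜ[L] (1 : k) : D ⊗[L] k) q = 0 := by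
      apply e.injective
      rw [map_zero, ← Polynomial.aeval_algHom_apply e (d ⊗ₜ[L] (1 : k)) q, ← hA]
      exact hqA
    -- Step 3: the minimal polynomial has degree at most 2.
    have hr_le : m.natDegree ≤ 2 := by
      by_contra hgt
      push_neg at hgt
      have hgt' : 2 < (minpoly L d).natDegree := hm ▸ hgt
      have h0 : q = 0 := aux_eq_zero_of_aeval_tmul d q hqE (by rw [hq_deg]; omega)
      exact hq_monic.ne_zero h0
    have hcases : m.natDegree = 1 ∨ m.natDegree = 2 := by omega
    rcases hcases with h1 | h2
    · -- degree 1: d is a scalar.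
      have hm1 : m = Polynomial.X + Polynomial.C (m.coeff 0) := hm_monic.eq_X_add_C h1
      have ha := minpoly.aeval L d
      rw [← hm, hm1] at ha
      simp only [map_add, Polynomial.aeval_X, Polynomial.aeval_C] at ha
      have hdval : d = algebraMap L D (-(m.coeff 0)) := by
        rw [map_neg]
        exact eq_neg_of_add_eq_zero_left ha
      exact ⟨-(m.coeff 0), fun hc => hd (by rw [hdval, hc, map_zero]), hdval⟩
    · -- degree 2.
      set m' := m.map (algebraMap L k) with hm'
      have hm'_monic : m'.Monic := hm_monic.map _
      have hm'_deg : m'.natDegree = 2 := by rw [hm', Polynomial.natDegree_map]; exact h2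
      have hm'E : Polynomial.aeval (d ⊗ₜ[L] (1 : k) : D ⊗[L] k) m' = 0 := by
        rw [hm', Polynomial.aeval_map_algebraMap]
        have h := Polynomial.aeval_algHom_apply
          (Algebra.TensorProduct.includeLeft : D →ₐ[L] D ⊗[L] k) d m
        have h2' : (Algebra.TensorProduct.includeLeft : D →ₐ[L] D ⊗[L] k) d
            = d ⊗ₜ[L] (1 : k) := rfl
        rw [h2'] at h
        rw [h, hm, minpoly.aeval, map_zero]
      -- q equals the image of the minimal polynomial.
      have hqm : q = m' := by
        rw [← sub_eq_zero]
        by_contra hne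
        have hsub : Polynomial.aeval (d ⊗ₜ[L] (1 : k) : D ⊗[L] k) (q - m') = 0 := by
          rw [map_sub, hqE, hm'E, sub_zero]
        have hdlt : (q - m').degree < ((2 : ℕ) : WithBot ℕ) := by
          have hdq : q.degree = ((2 : ℕ) : WithBot ℕ) := by
            rw [Polynomial.degree_eq_natDegree hq_monic.ne_zero, hq_deg]
          have hdm : m'.degree = ((2 : ℕ) : WithBot ℕ) := by
            rw [Polynomial.degree_eq_natDegree hm'_monic.ne_zero, hm'_deg]
          have := Polynomial.degree_sub_lt (hdq.trans hdm.symm) hq_monic.ne_zero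
            (hq_monic.leadingCoeff.trans hm'_monic.leadingCoeff.symm)
          rwa [hdq] at this
        have hnd : (q - m').natDegree < 2 := by
          rwa [← Polynomial.natDegree_lt_iff_degree_lt hne] at hdlt
        have h2'' : (minpoly L d).natDegree = 2 := hm ▸ h2
        exact hne (aux_eq_zero_of_aeval_tmul d (q - m') hsub (by omega))
      -- coefficient comparison.
      have hq_expand : q = Polynomial.X ^ 2
          - (Polynomial.C μ + Polynomial.C (μ + t)) * Polynomial.X
          + Polynomial.C μ * Polynomial.C (μ + t) := by
        rw [hq]; ring
      have hq1 : q.coeff 1 = -(μ + (μ + t)) := by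
        rw [hq_expand, ← Polynomial.C_add, ← Polynomial.C_mul]
        simp [Polynomial.coeff_X_pow, Polynomial.coeff_C]
      have hc1 : algebraMap L k (m.coeff 1) = -(μ + (μ + t)) := by
        rw [← Polynomial.coeff_map, ← hm', ← hqm]
        exact hq1
      -- trace comparison.
      set T := LinearMap.trace L D (LinearMap.mulLeft L d) with hT
      have htrace : (4 : k) * A.trace = algebraMap L k T := by
        let ℓ : D ⊗[L] k →ₗ[k] D ⊗[L] k := LinearMap.mulLeft k (d ⊗ₜ[L] (1 : k))
        have hc1' : (e.toLinearEquiv).conj ℓ = LinearMap.mulLeft k A := by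
          apply LinearMap.ext; intro X
          simp only [LinearEquiv.conj_apply, LinearMap.comp_apply, LinearEquiv.coe_coe,
            LinearMap.mulLeft_apply, ℓ, AlgEquiv.toLinearEquiv_apply]
          rw [show e.toLinearEquiv.symm X = e.symm X from rfl, map_mul,
            AlgEquiv.apply_symm_apply, hA]
        have hc2' : ((commk : D ⊗[L] k ≃ₗ[k] k ⊗[L] D)).conj ℓ
            = (LinearMap.mulLeft L d).baseChange k := by
          apply LinearMap.ext; intro x
          induction x using TensorProduct.induction_on with
          | zero => simp
          | tmul c y =>
            simp only [LinearEquiv.conj_apply, LinearMap.comp_apply, LinearEquiv.coe_coe,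
              commk_symm_tmul, LinearMap.mulLeft_apply, LinearMap.baseChange_tmul, ℓ]
            rw [show (d ⊗ₜ[L] (1 : k)) * (y ⊗ₜ[L] c) = (d * y) ⊗ₜ[L] c by
              rw [Algebra.TensorProduct.tmul_mul_tmul, one_mul], commk_tmul]
          | add x y hx hy =>
            simp only [map_add, hx, hy]
        have t1 : LinearMap.trace k _ (LinearMap.mulLeft k A) = LinearMap.trace k _ ℓ := by
          rw [← hc1', LinearMap.trace_conj']
        have t2 : LinearMap.trace k _ ℓ = algebraMap L k T := by
          rw [← LinearMap.trace_conj' ℓ (commk : D ⊗[L] k ≃ₗ[k] k ⊗[L] D), hc2',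
            LinearMap.trace_baseChange, hT]
        rw [← aux_trace_mulLeft_matrix A, t1, t2]
      have htrA : A.trace = t + 4 * μ := by
        have hA' : A = N + μ • (1 : Matrix (Fin 4) (Fin 4) k) := by
          rw [hN]; abel
        rw [hA', Matrix.trace_add, Matrix.trace_smul, Matrix.trace_one]
        show t + μ • ((Fintype.card (Fin 4) : ℕ) : k) = t + 4 * μ
        simp [Fintype.card_fin, smul_eq_mul, mul_comm]
      -- solve for μ over L.
      have hμval : algebraMap L k (T + 4 * m.coeff 1) = 8 * μ := by
        rw [map_add, map_mul, map_ofNat, hc1, ← htrace, htrA]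
        ring
      set lam0 : L := (T + 4 * m.coeff 1) / 8 with hlam0
      have hμL : μ = algebraMap L k lam0 := by
        have h80 : (8 : k) ≠ 0 := by norm_num
        have hcalc : 8 * algebraMap L k lam0 = 8 * μ := by
          rw [← hμval, show T + 4 * m.coeff 1 = 8 * lam0 by
            rw [hlam0]; field_simp, map_mul, map_ofNat]
        exact (mul_left_cancel₀ h80 hcalc).symm
      -- μ is a root of m, so m factors over L.
      have hqμ : Polynomial.eval μ q = 0 := by
        rw [hq]; simp
      rw [hqm] at hqμ
      have heval : Polynomial.eval (algebraMap L k lam0) (m.map (algebraMap L k)) = 0 := by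
        rw [← hm', ← hμL]; exact hqμ
      rw [Polynomial.eval_map, Polynomial.eval₂_at_apply] at heval
      have hroot : Polynomial.eval lam0 m = 0 :=
        (algebraMap L k).injective (heval.trans (map_zero (algebraMap L k)).symm)
      have hdvd : (Polynomial.X - Polynomial.C lam0) ∣ m :=
        Polynomial.dvd_iff_isRoot.mpr hroot
      obtain ⟨g, hg⟩ := hdvd
      have hgm : g.Monic := by
        have hmg := hm_monic
        rw [hg] at hmg
        exact (Polynomial.monic_X_sub_C lam0).of_mul_monic_left hmg
      have hgdeg : g.natDegree = 1 := by
        have h0 : m.natDegree = 1 + g.natDegree := by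
          rw [hg, Polynomial.natDegree_mul (Polynomial.X_sub_C_ne_zero lam0) hgm.ne_zero,
            Polynomial.natDegree_X_sub_C]
        omega
      have hgeq : g = Polynomial.X + Polynomial.C (g.coeff 0) := hgm.eq_X_add_C hgdeg
      have hfac : (d - algebraMap L D lam0) * (d + algebraMap L D (g.coeff 0)) = 0 := by
        have ha := minpoly.aeval L d
        rw [← hm, hg, map_mul, hgeq] at ha
        simpa using ha
      rcases mul_eq_zero.mp hfac with h | h
      · have hdval : d = algebraMap L D lam0 := by rwa [sub_eq_zero] at h
        exact ⟨lam0, fun hc => hd (by rw [hdval, hc, map_zero]), hdval⟩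
      · have hdval : d = algebraMap L D (-(g.coeff 0)) := by
          rw [map_neg]
          exact eq_neg_of_add_eq_zero_left h
        exact ⟨-(g.coeff 0), fun hc => hd (by rw [hdval, hc, map_zero]), hdval⟩
  · rintro ⟨lam, hlam, rfl⟩
    refine ⟨algebraMap L k lam, ?_, ?_⟩
    · simpa using (algebraMap L k).injective.ne hlam
    · have h1 : (algebraMap L D lam) ⊗ₜ[L] (1 : k)
          = algebraMap k (D ⊗[L] k) (algebraMap L k lam) := by
        rw [← IsScalarTower.algebraMap_apply L k (D ⊗[L] k)]
        rfl
      rw [h1, AlgEquiv.commutes, Algebra.algebraMap_eq_smul_one, sub_self]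
      simp [Matrix.rank_zero]
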